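/- Correctness of the lopsided division algorithm (digit computation): let a b : ℤ with b odd, and let c, r : ℕ → ℤ be the lopsided-division sequences for a and b. Then for every j : ℕ, the integer 2^j divides a - b * (∑_{i < j} (if (c i).testBit i then 2^i else 0)); in other words, the diagonal bits c_i^{(i)} produced by the algorithm are exactly the first j binary digits of the 2-adic quotient a/b. -/

import Mathlib

instance : XorOp ℤ := ⟨Int.xor⟩
instance : AndOp ℤ := ⟨Int.land⟩

namespace LopAux

lemma tb_xor (x y : ℤ) (k : ℕ) : (x ^^^ y).testBit k = xor (x.testBit k) (y.testBit k) :=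
  Int.testBit_lxor x y k

lemma tb_land (x y : ℤ) (k : ℕ) : (x &&& y).testBit k = ((x.testBit k) && (y.testBit k)) :=
  Int.testBit_land x y k

lemma not_eq_lnot (x : ℤ) : ~~~x = Int.lnot x := by cases x <;> rfl

lemma tb_not (x : ℤ) (k : ℕ) : (~~~x).testBit k = !(x.testBit k) := by
  rw [not_eq_lnot]; exact Int.testBit_lnot x k

lemma tb_zero (k : ℕ) : (0:ℤ).testBit k = false := Nat.zero_testBit k

lemma tb0 (x : ℤ) : x.testBit 0 = x.bodd := by
  cases x <;>
    · simp only [Int.testBit, Int.bodd, Nat.testBit_zero, Nat.bodd]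

lemma tbS (x : ℤ) (k : ℕ) : x.testBit (k+1) = (Int.div2 x).testBit k := by
  cases x with
  | ofNat n =>
    show Nat.testBit n (k+1) = Nat.testBit n.div2 k
    rw [Nat.div2_val]; exact Nat.testBit_succ n k
  | negSucc n =>
    show (!Nat.testBit n (k+1)) = !Nat.testBit n.div2 k
    rw [Nat.div2_val, Nat.testBit_succ]

lemma decomp (x : ℤ) : x = 2 * Int.div2 x + (if x.testBit 0 then 1 else 0) := by
  have h := Int.bodd_add_div2 x
  rw [tb0]
  cases hb : x.bodd <;> simp [hb] at h ⊢ <;> omega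

lemma div2_two_mul (w : ℤ) : Int.div2 (2*w) = w := by
  rw [Int.div2_val]; exact Int.mul_ediv_cancel_left w two_ne_zero

lemma dvd_of_bits : ∀ (N : ℕ) (x y : ℤ), (∀ i < N, x.testBit i = y.testBit i) →
    (2^N : ℤ) ∣ x - y := by
  intro N
  induction N with
  | zero => simp
  | succ N ih =>
    intro x y h
    have h0 : x.testBit 0 = y.testBit 0 := h 0 (Nat.succ_pos N)
    have hx := decomp x
    have hy := decomp y
    obtain ⟨m, hm⟩ := ih (Int.div2 x) (Int.div2 y)
      (fun i hi => by rw [← tbS, ← tbS]; exact h (i+1) (by omega))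
    exact ⟨m, by rw [h0] at hx; rw [pow_succ]; linear_combination hx - hy + 2*hm⟩

lemma forall_pow_dvd_eq_zero {d : ℤ} (h : ∀ N : ℕ, (2^N : ℤ) ∣ d) : d = 0 := by
  by_contra hd
  have h1 := h d.natAbs
  have h2 : (2:ℕ)^d.natAbs ∣ d.natAbs := by
    have h5 := Int.natAbs_dvd_natAbs.mpr h1
    rwa [Int.natAbs_pow] at h5
  have h3 := Nat.le_of_dvd (Int.natAbs_pos.mpr hd) h2
  have h4 := Nat.lt_two_pow_self (n := d.natAbs)
  omega

lemma ext_tb {x y : ℤ} (h : ∀ k, x.testBit k = y.testBit k) : x = y := by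
  have := forall_pow_dvd_eq_zero (fun N => dvd_of_bits N x y (fun i _ => h i))
  omega

lemma div2_xor (x y : ℤ) : Int.div2 (x ^^^ y) = Int.div2 x ^^^ Int.div2 y :=
  ext_tb fun k => by rw [← tbS, tb_xor, tb_xor, ← tbS, ← tbS]

lemma div2_land (x y : ℤ) : Int.div2 (x &&& y) = Int.div2 x &&& Int.div2 y :=
  ext_tb fun k => by rw [← tbS, tb_land, tb_land, ← tbS, ← tbS]

lemma div2_not (x : ℤ) : Int.div2 (~~~x) = ~~~(Int.div2 x) :=
  ext_tb fun k => by rw [← tbS, tb_not, tb_not, ← tbS]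

lemma bits_of_dvd : ∀ (N : ℕ) (x : ℤ), (2^N : ℤ) ∣ x → ∀ i < N, x.testBit i = false := by
  intro N
  induction N with
  | zero => omega
  | succ N ih =>
    intro x hx i hi
    obtain ⟨m, hm⟩ := hx
    match i with
    | 0 =>
      by_contra h0
      rw [Bool.not_eq_false] at h0
      have hd := decomp x
      rw [h0, if_pos rfl] at hd
      have h2 : (2:ℤ) ∣ x := dvd_trans (dvd_pow_self 2 (Nat.succ_ne_zero N)) ⟨m, hm⟩
      obtain ⟨k, hk⟩ := h2
      omega
    | j + 1 =>
      rw [tbS]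
      have hdd : Int.div2 x = 2^N * m := by
        have : x = 2 * (2^N * m) := by rw [hm, pow_succ]; ring
        rw [this, div2_two_mul]
      exact ih (Int.div2 x) ⟨m, hdd⟩ j (by omega)

lemma tb_shift (i : ℕ) (u : ℤ) (k : ℕ) : ((2:ℤ)^i * u).testBit (i + k) = u.testBit k := by
  induction i with
  | zero => simp
  | succ i ih =>
    have h1 : (2:ℤ)^(i+1) * u = 2 * (2^i * u) := by ring
    have h2 : i + 1 + k = (i + k) + 1 := by omega
    rw [h1, h2, tbS, div2_two_mul, ih]

lemma odd_tb0 {u : ℤ} (hu : Odd u) : u.testBit 0 = true := by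
  by_contra h0
  rw [Bool.not_eq_true] at h0
  have hd := decomp u
  rw [h0, if_neg (by simp)] at hd
  obtain ⟨n, hn⟩ := hu
  omega

lemma eps (p q s : Bool) :
    (if xor (xor p q) s then (1:ℤ) else 0)
      - 2 * (if xor (xor (!p && q) (q && s)) (s && !p) then (1:ℤ) else 0)
      - (if p then (1:ℤ) else 0) + (if q then (1:ℤ) else 0) + (if s then (1:ℤ) else 0) = 0 := by
  cases p <;> cases q <;> cases s <;> norm_num

lemma sub3_dvd : ∀ (N : ℕ) (x y z : ℤ), (2^N : ℤ) ∣
    ((x ^^^ y ^^^ z) - 2 * (((~~~x) &&& y) ^^^ (y &&& z) ^^^ (z &&& (~~~x))) - (x - y - z)) := by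
  intro N
  induction N with
  | zero => simp
  | succ N ih =>
    intro x y z
    have hx := decomp x
    have hy := decomp y
    have hz := decomp z
    have hs : x ^^^ y ^^^ z = 2 * (Int.div2 x ^^^ Int.div2 y ^^^ Int.div2 z)
        + (if xor (xor (x.testBit 0) (y.testBit 0)) (z.testBit 0) then (1:ℤ) else 0) := by
      conv_lhs => rw [decomp (x ^^^ y ^^^ z)]
      rw [div2_xor, div2_xor, tb_xor, tb_xor]
    have hB : ((~~~x) &&& y) ^^^ (y &&& z) ^^^ (z &&& (~~~x))
        = 2 * (((~~~(Int.div2 x)) &&& Int.div2 y) ^^^ (Int.div2 y &&& Int.div2 z)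
            ^^^ (Int.div2 z &&& (~~~(Int.div2 x))))
        + (if xor (xor ((!x.testBit 0) && y.testBit 0) (y.testBit 0 && z.testBit 0))
            (z.testBit 0 && (!x.testBit 0)) then (1:ℤ) else 0) := by
      conv_lhs => rw [decomp (((~~~x) &&& y) ^^^ (y &&& z) ^^^ (z &&& (~~~x)))]
      rw [div2_xor, div2_xor, div2_land, div2_land, div2_land, div2_not,
        tb_xor, tb_xor, tb_land, tb_land, tb_land, tb_not]
    obtain ⟨m, hm⟩ := ih (Int.div2 x) (Int.div2 y) (Int.div2 z)
    refine ⟨m, ?_⟩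
    have he := eps (x.testBit 0) (y.testBit 0) (z.testBit 0)
    rw [pow_succ]
    linear_combination hs - 2*hB - hx + hy + hz + 2*hm + he

lemma sub3 (x y z : ℤ) :
    (x ^^^ y ^^^ z) - 2 * (((~~~x) &&& y) ^^^ (y &&& z) ^^^ (z &&& (~~~x))) = x - y - z := by
  have := forall_pow_dvd_eq_zero (fun N => sub3_dvd N x y z)
  omega

lemma step (C R T : ℤ) (i : ℕ) (hR : (2^(i+1) : ℤ) ∣ R) (hC : (2^i : ℤ) ∣ C)
    (hT_low : ∀ k < i, T.testBit k = false) (hT_i : T.testBit i = C.testBit i) :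
    ((2^(i+1) : ℤ) ∣ (C ^^^ R ^^^ T)) ∧
      ((2^(i+2) : ℤ) ∣ 2 * (((~~~C) &&& R) ^^^ (R &&& T) ^^^ (T &&& (~~~C)))) := by
  have hrb : ∀ k, k ≤ i → R.testBit k = false :=
    fun k hk => bits_of_dvd (i+1) R hR k (by omega)
  have hcb : ∀ k, k < i → C.testBit k = false := fun k hk => bits_of_dvd i C hC k hk
  constructor
  · have h := dvd_of_bits (i+1) (C ^^^ R ^^^ T) 0 ?_
    · simpa using h
    · intro k hk
      rw [tb_xor, tb_xor, tb_zero, hrb k (by omega)]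
      rcases Nat.lt_or_ge k i with hlt | hge
      · rw [hcb k hlt, hT_low k hlt]; rfl
      · have hk' : k = i := by omega
        subst hk'
        rw [hT_i]
        cases C.testBit k <;> simp
  · have hS : (2^(i+1) : ℤ) ∣ (((~~~C) &&& R) ^^^ (R &&& T) ^^^ (T &&& (~~~C))) := by
      have h := dvd_of_bits (i+1) (((~~~C) &&& R) ^^^ (R &&& T) ^^^ (T &&& (~~~C))) 0 ?_
      · simpa using h
      · intro k hk
        rw [tb_xor, tb_xor, tb_land, tb_land, tb_land, tb_not, tb_zero, hrb k (by omega)]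
        rcases Nat.lt_or_ge k i with hlt | hge
        · rw [hT_low k hlt]; simp
        · have hk' : k = i := by omega
          subst hk'
          rw [hT_i]
          cases C.testBit k <;> simp
    obtain ⟨m, hm⟩ := hS
    exact ⟨m, by rw [hm]; ring⟩

end LopAux

open LopAux in
/-- Correctness of the lopsided division algorithm (digit computation): the diagonal
bits `c i .testBit i` are the first `j` binary digits of the 2-adic quotient `a/b`,
i.e. `2^j` divides `a - b * (∑_{i<j} bit_i · 2^i)`. -/
theorem lopsided_division_digits (a b : ℤ) (hb : Odd b) (c r : ℕ → ℤ)
    (hc0 : c 0 = a) (hr0 : r 0 = 0)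
    (hc : ∀ i, c (i + 1) =
      c i ^^^ r i ^^^ (if (c i).testBit i then 2 ^ i * b else 0))
    (hr : ∀ i, r (i + 1) =
      2 * (((~~~(c i)) &&& r i)
        ^^^ ((r i) &&& (if (c i).testBit i then 2 ^ i * b else 0))
        ^^^ ((if (c i).testBit i then 2 ^ i * b else 0) &&& (~~~(c i))))) :
    ∀ j : ℕ, (2 ^ j : ℤ) ∣
      a - b * ∑ i ∈ Finset.range j, (if (c i).testBit i then (2 : ℤ) ^ i else 0) := by
  have hT_low : ∀ i, ∀ k < i,
      (if (c i).testBit i then (2:ℤ) ^ i * b else 0).testBit k = false := by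
    intro i k hk
    by_cases hci : (c i).testBit i
    · rw [if_pos hci]
      exact bits_of_dvd i _ ⟨b, rfl⟩ k hk
    · rw [if_neg hci]
      exact tb_zero k
  have hT_i : ∀ i, (if (c i).testBit i then (2:ℤ) ^ i * b else 0).testBit i
      = (c i).testBit i := by
    intro i
    by_cases hci : (c i).testBit i
    · rw [if_pos hci, hci]
      have h := tb_shift i b 0
      rw [Nat.add_zero] at h
      rw [h]
      exact odd_tb0 hb
    · rw [if_neg hci]
      rw [Bool.not_eq_true] at hci
      rw [hci]
      exact tb_zero i
  have hP : ∀ i, ((2^(i+1) : ℤ) ∣ r i) ∧ ((2^i : ℤ) ∣ c i) := by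
    intro i
    induction i with
    | zero => exact ⟨by rw [hr0]; exact dvd_zero _, by rw [pow_zero]; exact one_dvd _⟩
    | succ i ih =>
      have hs := step (c i) (r i) (if (c i).testBit i then (2:ℤ) ^ i * b else 0) i
        ih.1 ih.2 (hT_low i) (hT_i i)
      exact ⟨by rw [hr i]; exact hs.2, by rw [hc i]; exact hs.1⟩
  have hinv : ∀ j, c j - r j
      = a - ∑ i ∈ Finset.range j, (if (c i).testBit i then (2:ℤ) ^ i * b else 0) := by
    intro j
    induction j with
    | zero => simp [hc0, hr0]
    | succ j ihj =>
      rw [hc j, hr j, sub3, Finset.sum_range_succ, ihj]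
      ring
  intro j
  have hbs : b * ∑ i ∈ Finset.range j, (if (c i).testBit i then (2 : ℤ) ^ i else 0)
      = ∑ i ∈ Finset.range j, (if (c i).testBit i then (2:ℤ) ^ i * b else 0) := by
    rw [Finset.mul_sum]
    refine Finset.sum_congr rfl fun i _ => ?_
    by_cases h : (c i).testBit i <;> simp [h] <;> ring
  rw [hbs, ← hinv j]
  exact dvd_sub (hP j).2 (dvd_trans ⟨2, by rw [pow_succ]⟩ (hP j).1)
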